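/- Let γ > 2, α > 0, C > 0, n ≥ 2, λ > 0, and let ζ(r) = r^{-α}. Let F : (0,∞) → ℝ satisfy F(r) ≥ (C(n-1)/r)(1+r)^{1+γ/2}. Then there exists R₀ > 0 such that ζ''(r) + F(r)·ζ'(r) + λ·ζ(r) ≤ 0 for all r ≥ R₀. -/

import Mathlib

open Real Filter

lemma deriv1_aux (α : ℝ) {r : ℝ} (hr : 0 < r) :
    deriv (fun x : ℝ => x ^ (-α)) r = (-α) * r ^ (-α - 1) :=
  Real.deriv_rpow_const r (-α)

lemma deriv2_aux (α : ℝ) {r : ℝ} (hr : 0 < r) :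
    deriv (deriv (fun x : ℝ => x ^ (-α))) r
      = (-α) * ((-α - 1) * r ^ (-α - 1 - 1)) := by
  have h : deriv (fun x : ℝ => x ^ (-α)) =ᶠ[nhds r] fun x => (-α) * x ^ (-α - 1) := by
    filter_upwards [eventually_gt_nhds hr] with x hx
    exact Real.deriv_rpow_const x (-α)
  rw [h.deriv_eq, deriv_const_mul _ (Real.differentiableAt_rpow_const_of_ne _ hr.ne'),
    Real.deriv_rpow_const r (-α - 1)]

theorem stmt_12 (n : ℕ) (hn : 2 ≤ n) (γ α C lam : ℝ)
    (hγ : 2 < γ) (hα : 0 < α) (hC : 0 < C) (hlam : 0 < lam)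
    (F : ℝ → ℝ)
    (hF : ∀ r > (0:ℝ), C * (n - 1) / r * (1 + r) ^ (1 + γ / 2) ≤ F r) :
    ∃ R₀ > (0:ℝ), ∀ r ≥ R₀,
      deriv (deriv (fun r : ℝ => r ^ (-α))) r +
        F r * deriv (fun r : ℝ => r ^ (-α)) r +
        lam * r ^ (-α) ≤ 0 := by
  have hexp : (0:ℝ) < γ / 2 - 1 := by linarith
  have ht : Tendsto (fun r : ℝ => α * C * r ^ (γ / 2 - 1)) atTop atTop :=
    (tendsto_rpow_atTop hexp).const_mul_atTop (by positivity)
  obtain ⟨a, ha⟩ := eventually_atTop.mp (ht.eventually_ge_atTop (α * (α + 1) + lam))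
  refine ⟨max a 1, lt_of_lt_of_le one_pos (le_max_right _ _), ?_⟩
  intro r hr
  have hr1 : (1:ℝ) ≤ r := le_trans (le_max_right _ _) hr
  have hr0 : (0:ℝ) < r := lt_of_lt_of_le one_pos hr1
  have hga : α * (α + 1) + lam ≤ α * C * r ^ (γ / 2 - 1) :=
    ha r (le_trans (le_max_left _ _) hr)
  rw [deriv1_aux α hr0, deriv2_aux α hr0]
  -- lower bound on F r
  have hn1 : (1:ℝ) ≤ (n:ℝ) - 1 := by
    have : (2:ℝ) ≤ (n:ℝ) := by exact_mod_cast hn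
    linarith
  have hFr : C * r ^ (γ / 2) ≤ F r := by
    have h1 : r ^ (1 + γ / 2) ≤ (1 + r) ^ (1 + γ / 2) :=
      Real.rpow_le_rpow hr0.le (by linarith) (by linarith)
    have h2 : C * r ^ (γ / 2) = C * 1 / r * r ^ (1 + γ / 2) := by
      rw [Real.rpow_add hr0, Real.rpow_one]
      field_simp
    calc C * r ^ (γ / 2) = C * 1 / r * r ^ (1 + γ / 2) := h2
      _ ≤ C * ((n:ℝ) - 1) / r * (1 + r) ^ (1 + γ / 2) := by
          apply mul_le_mul
          · gcongr
          · exact h1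
          · positivity
          · positivity
      _ ≤ F r := hF r hr0
  -- key inequality
  have hkey : α * (α + 1) * r ^ (-α - 1 - 1) + lam * r ^ (-α)
      ≤ F r * (α * r ^ (-α - 1)) := by
    have hmono : r ^ (-α - 1 - 1) ≤ r ^ (-α) :=
      Real.rpow_le_rpow_of_exponent_le hr1 (by linarith)
    have hstep : (α * (α + 1) + lam) * r ^ (-α) ≤ α * C * r ^ (γ / 2 - 1) * r ^ (-α) := by
      apply mul_le_mul_of_nonneg_right hga (by positivity)
    have e1 : r ^ (γ / 2 - 1) * r ^ (-α) = r ^ (γ / 2 - 1 + -α) := (Real.rpow_add hr0 _ _).symm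
    have e2 : r ^ (γ / 2) * r ^ (-α - 1) = r ^ (γ / 2 + (-α - 1)) := (Real.rpow_add hr0 _ _).symm
    have e3 : γ / 2 - 1 + -α = γ / 2 + (-α - 1) := by ring
    have heq : α * C * r ^ (γ / 2 - 1) * r ^ (-α) = C * r ^ (γ / 2) * (α * r ^ (-α - 1)) := by
      have h : r ^ (γ / 2 - 1) * r ^ (-α) = r ^ (γ / 2) * r ^ (-α - 1) := by
        rw [e1, e2, e3]
      linear_combination (α * C) * h
    have hF2 : C * r ^ (γ / 2) * (α * r ^ (-α - 1)) ≤ F r * (α * r ^ (-α - 1)) := by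
      apply mul_le_mul_of_nonneg_right hFr (by positivity)
    have hlhs : α * (α + 1) * r ^ (-α - 1 - 1) + lam * r ^ (-α)
        ≤ (α * (α + 1) + lam) * r ^ (-α) := by
      nlinarith [mul_le_mul_of_nonneg_left hmono (by positivity : (0:ℝ) ≤ α * (α + 1))]
    linarith [heq ▸ hstep]
  nlinarith [hkey]
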